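/- For every natural number n, the modified q-Euler characteristic for N = 3 with pentagonal-number exponents equals 1; explicitly, as polynomials in ℤ[q]: Σ_{i∈ℤ} (−1)^i · q^{(3i² − i)/2} · [2n choose c(i)]_q = 1, where the column function is c(2j) = n + 3j and c(2j + 1) = n + 1 + 3j for j ∈ ℤ. -/

import Mathlib

open Polynomial

/-- The Gaussian binomial coefficient `[n choose k]_q` as a polynomial in `ℤ[q]`:
the sum over `k`-element subsets `S` of `{0, 1, …, n−1}` of
`q^((Σ_{s∈S} s) − k(k−1)/2)`. -/
noncomputable def gaussBinom (n k : ℕ) : Polynomial ℤ :=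
  ∑ S ∈ (Finset.range n).powersetCard k, X ^ ((∑ s ∈ S, s) - k * (k - 1) / 2)

/-- The Gaussian binomial coefficient with an integer lower index, equal to `0`
when `j < 0` or `j > n`. -/
noncomputable def gaussBinomZ (n : ℕ) (j : ℤ) : Polynomial ℤ :=
  if 0 ≤ j then gaussBinom n j.toNat else 0

/-- The column function `c`: `c(2j) = n + r·j` and `c(2j + 1) = n + off + r·j`. -/
def colFun (n : ℕ) (r off : ℤ) (i : ℤ) : ℤ :=
  if Even i then (n : ℤ) + r * (i / 2) else (n : ℤ) + off + r * ((i - 1) / 2)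

lemma two_dvd_mul_pred (k : ℕ) : 2 * (k * (k-1) / 2) = k * (k-1) := by
  rcases k with _ | k
  · simp
  · rw [Nat.mul_div_cancel']
    simpa [Nat.succ_sub_one, mul_comm] using (Nat.even_mul_succ_self k).two_dvd

lemma tri_le_sum : ∀ (k : ℕ) (S : Finset ℕ), S.card = k → k * (k-1) / 2 ≤ ∑ s ∈ S, s := by
  intro k
  induction k with
  | zero => simp
  | succ k ih =>
    intro S hS
    have hne : S.Nonempty := by
      rw [← Finset.card_pos, hS]; omega
    set M := S.max' hne with hM
    have hmem : M ∈ S := S.max'_mem hne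
    have hsub : S ⊆ Finset.range (M+1) := by
      intro s hs
      simp only [Finset.mem_range]
      have := S.le_max' s hs
      omega
    have hcard : k + 1 ≤ M + 1 := by
      have := Finset.card_le_card hsub
      simpa [hS] using this
    have h1 : k * (k-1) / 2 ≤ ∑ s ∈ S.erase M, s := by
      apply ih
      rw [Finset.card_erase_of_mem hmem, hS]; omega
    have h2 : (∑ s ∈ S.erase M, s) + M = ∑ s ∈ S, s := Finset.sum_erase_add _ _ hmem
    have e1 := two_dvd_mul_pred k
    have e2 := two_dvd_mul_pred (k+1)
    have e3 : (k+1) * k = k * (k-1) + 2 * k := by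
      rcases k with _ | k
      · simp
      · simp only [Nat.succ_sub_one]; ring
    simp only [Nat.succ_sub_one] at e2 ⊢
    omega

lemma pascal_a (n k : ℕ) :
    gaussBinom (n+1) (k+1) = gaussBinom n (k+1) + X ^ (n - k) * gaussBinom n k := by
  unfold gaussBinom
  rw [Finset.range_add_one, Finset.powersetCard_succ_insert (Finset.notMem_range_self)]
  rw [Finset.sum_union]
  · congr 1
    rw [Finset.sum_image]
    · rw [Finset.mul_sum]
      apply Finset.sum_congr rfl
      intro T hT
      rw [Finset.mem_powersetCard] at hT
      obtain ⟨hTsub, hTcard⟩ := hT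
      have hnT : n ∉ T := fun h => Finset.notMem_range_self (hTsub h)
      rw [Finset.sum_insert hnT, ← pow_add]
      congr 1
      have h1 : k * (k-1) / 2 ≤ ∑ s ∈ T, s := tri_le_sum k T hTcard
      have h2 : k ≤ n := by
        have := Finset.card_le_card hTsub
        rw [hTcard, Finset.card_range] at this
        exact this
      have e1 := two_dvd_mul_pred k
      have e2 := two_dvd_mul_pred (k+1)
      have e3 : (k+1) * k = k * (k-1) + 2 * k := by
        rcases k with _ | k
        · simp
        · simp only [Nat.succ_sub_one]; ring
      simp only [Nat.succ_sub_one] at e2 ⊢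
      omega
    · intro a ha b hb hab
      rw [Finset.mem_coe, Finset.mem_powersetCard] at ha hb
      have hna : n ∉ a := fun h => Finset.notMem_range_self (ha.1 h)
      have hnb : n ∉ b := fun h => Finset.notMem_range_self (hb.1 h)
      have := congrArg (Finset.erase · n) hab
      simpa [Finset.erase_insert, hna, hnb] using this
  · rw [Finset.disjoint_left]
    intro S hS hS'
    rw [Finset.mem_powersetCard] at hS
    rw [Finset.mem_image] at hS'
    obtain ⟨T, hT, rfl⟩ := hS'
    exact Finset.notMem_range_self (hS.1 (Finset.mem_insert_self n T))

def succEmb : ℕ ↪ ℕ := ⟨Nat.succ, Nat.succ_injective⟩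

lemma range_succ_insert (n : ℕ) :
    Finset.range (n+1) = insert 0 ((Finset.range n).map succEmb) := by
  ext x
  simp only [Finset.mem_range, Finset.mem_insert, Finset.mem_map, succEmb,
    Function.Embedding.coeFn_mk]
  constructor
  · intro h
    rcases x with _ | x
    · left; rfl
    · right; exact ⟨x, by omega, rfl⟩
  · rintro (rfl | ⟨y, hy, rfl⟩) <;> omega

lemma sum_map_succ (T : Finset ℕ) : (∑ s ∈ T.map succEmb, s) = (∑ s ∈ T, s) + T.card := by
  rw [Finset.sum_map]
  simp only [succEmb, Function.Embedding.coeFn_mk, Nat.succ_eq_add_one]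
  rw [Finset.sum_add_distrib, Finset.sum_const, smul_eq_mul, mul_one]

lemma zero_not_mem_map_succ (T : Finset ℕ) : (0:ℕ) ∉ T.map succEmb := by
  simp [succEmb]

lemma pascal_b (n k : ℕ) :
    gaussBinom (n+1) (k+1) = X ^ (k+1) * gaussBinom n (k+1) + gaussBinom n k := by
  have hme : ∀ T : Finset ℕ, (Finset.mapEmbedding succEmb).toEmbedding T = T.map succEmb :=
    fun _ => rfl
  unfold gaussBinom
  rw [range_succ_insert, Finset.powersetCard_succ_insert (zero_not_mem_map_succ _),
    Finset.sum_union]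
  · congr 1
    · -- subsets not containing 0
      rw [Finset.powersetCard_map, Finset.sum_map, Finset.mul_sum]
      apply Finset.sum_congr rfl
      intro T hT
      rw [Finset.mem_powersetCard] at hT
      obtain ⟨hTsub, hTcard⟩ := hT
      rw [hme, sum_map_succ, hTcard, ← pow_add]
      congr 1
      have h1 : (k+1) * k / 2 ≤ ∑ s ∈ T, s := by
        have := tri_le_sum (k+1) T hTcard
        simpa using this
      simp only [Nat.succ_sub_one]
      omega
    · -- subsets containing 0
      rw [Finset.powersetCard_map, Finset.map_eq_image, Finset.image_image,
        Finset.sum_image]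
      · apply Finset.sum_congr rfl
        intro T hT
        rw [Finset.mem_powersetCard] at hT
        obtain ⟨hTsub, hTcard⟩ := hT
        have hsum : ∑ s ∈ (insert 0 ∘ ⇑(Finset.mapEmbedding succEmb).toEmbedding) T, s
            = (∑ s ∈ T, s) + k := by
          show ∑ s ∈ insert 0 (T.map succEmb), s = _
          rw [Finset.sum_insert (zero_not_mem_map_succ T), sum_map_succ, hTcard]
          omega
        rw [hsum]
        congr 1
        have h1 : k * (k-1) / 2 ≤ ∑ s ∈ T, s := tri_le_sum k T hTcard
        have e1 := two_dvd_mul_pred k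
        have e2 := two_dvd_mul_pred (k+1)
        have e3 : (k+1) * k = k * (k-1) + 2 * k := by
          rcases k with _ | k
          · simp
          · simp only [Nat.succ_sub_one]; ring
        simp only [Nat.succ_sub_one] at e2 ⊢
        omega
      · intro a ha b hb hab
        simp only [Function.comp, hme] at hab
        have : a.map succEmb = b.map succEmb := by
          rw [← Finset.erase_insert (zero_not_mem_map_succ a), hab,
            Finset.erase_insert (zero_not_mem_map_succ b)]
        exact Finset.map_injective succEmb this
  · rw [Finset.disjoint_left]
    intro S hS hS'
    rw [Finset.mem_powersetCard] at hS
    rw [Finset.mem_image] at hS'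
    obtain ⟨T, hT, rfl⟩ := hS'
    exact zero_not_mem_map_succ _ (hS.1 (Finset.mem_insert_self 0 T))

lemma gaussBinom_zero (m : ℕ) : gaussBinom m 0 = 1 := by
  unfold gaussBinom
  rw [Finset.powersetCard_zero, Finset.sum_singleton]
  simp

lemma gaussBinom_of_lt {m k : ℕ} (h : m < k) : gaussBinom m k = 0 := by
  unfold gaussBinom
  rw [Finset.powersetCard_eq_empty.mpr (by simpa using h), Finset.sum_empty]

lemma gBZ_of_neg {m : ℕ} {c : ℤ} (h : c < 0) : gaussBinomZ m c = 0 := by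
  unfold gaussBinomZ
  rw [if_neg (by omega)]

lemma gBZ_of_gt {m : ℕ} {c : ℤ} (h : (m:ℤ) < c) : gaussBinomZ m c = 0 := by
  unfold gaussBinomZ
  rw [if_pos (by omega), gaussBinom_of_lt (by omega)]

lemma gBZ_zero (m : ℕ) : gaussBinomZ m 0 = 1 := by
  unfold gaussBinomZ
  rw [if_pos le_rfl]
  exact gaussBinom_zero m

lemma gBZ_nat (m k : ℕ) : gaussBinomZ m (k : ℤ) = gaussBinom m k := by
  unfold gaussBinomZ
  rw [if_pos (by positivity)]
  simp

lemma pascalZ_a (m : ℕ) (c : ℤ) :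
    gaussBinomZ (m+1) c = gaussBinomZ m c + X ^ (((m:ℤ)+1-c).toNat) * gaussBinomZ m (c-1) := by
  rcases lt_trichotomy c 0 with h | h | h
  · rw [gBZ_of_neg h, gBZ_of_neg h, gBZ_of_neg (by omega), mul_zero, add_zero]
  · subst h
    rw [gBZ_zero, gBZ_zero, gBZ_of_neg (by omega), mul_zero, add_zero]
  · rcases le_or_gt c (m+1) with h2 | h2
    · obtain ⟨k, rfl⟩ : ∃ k : ℕ, c = (k:ℤ)+1 := ⟨(c-1).toNat, by omega⟩
      have e1 : ((k:ℤ)+1) = ((k+1 : ℕ) : ℤ) := by push_cast; ring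
      have e2 : ((k:ℤ)+1) - 1 = ((k : ℕ) : ℤ) := by push_cast; ring
      have e3 : ((m:ℤ)+1-((k:ℤ)+1)).toNat = m - k := by omega
      rw [e3, e2, e1, gBZ_nat, gBZ_nat, gBZ_nat]
      exact pascal_a m k
    · rw [gBZ_of_gt (by omega), gBZ_of_gt (by omega), gBZ_of_gt (by omega), mul_zero, add_zero]

lemma pascalZ_b (m : ℕ) (c : ℤ) :
    gaussBinomZ (m+1) c = X ^ (c.toNat) * gaussBinomZ m c + gaussBinomZ m (c-1) := by
  rcases lt_trichotomy c 0 with h | h | h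
  · rw [gBZ_of_neg h, gBZ_of_neg h, gBZ_of_neg (by omega), mul_zero, add_zero]
  · subst h
    rw [gBZ_zero, gBZ_zero, gBZ_of_neg (by omega), add_zero]
    simp
  · rcases le_or_gt c (m+1) with h2 | h2
    · obtain ⟨k, rfl⟩ : ∃ k : ℕ, c = (k:ℤ)+1 := ⟨(c-1).toNat, by omega⟩
      have e1 : ((k:ℤ)+1) = ((k+1 : ℕ) : ℤ) := by push_cast; ring
      have e2 : ((k:ℤ)+1) - 1 = ((k : ℕ) : ℤ) := by push_cast; ring
      have e3 : ((k:ℤ)+1).toNat = k + 1 := by omega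
      rw [e3, e2, e1, gBZ_nat, gBZ_nat, gBZ_nat]
      exact pascal_b m k
    · rw [gBZ_of_gt (by omega), gBZ_of_gt (by omega), gBZ_of_gt (by omega), mul_zero, add_zero]

/-- the column at level `M`: `⌊(M + 3i)/2⌋`. -/
def colZ (M : ℕ) (i : ℤ) : ℤ :=
  if Even ((M:ℤ) + i) then ((M:ℤ) + 3*i)/2 else ((M:ℤ) + 3*i - 1)/2

lemma colZ_even {M : ℕ} {i : ℤ} (h : Even ((M:ℤ) + i)) :
    2 * colZ M i = (M:ℤ) + 3*i := by
  rw [colZ, if_pos h]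
  rw [Int.even_iff] at h
  omega

lemma colZ_odd {M : ℕ} {i : ℤ} (h : ¬ Even ((M:ℤ) + i)) :
    2 * colZ M i = (M:ℤ) + 3*i - 1 := by
  rw [colZ, if_neg h]
  rw [Int.even_iff] at h
  omega

lemma pent_even (i : ℤ) : 2 * ((3*i^2 - i)/2) = 3*i^2 - i := by
  have h : Even (3*i^2 - i) := by
    rcases Int.even_or_odd i with ⟨k, rfl⟩ | ⟨k, rfl⟩
    · exact ⟨6*k^2 - k, by ring⟩
    · exact ⟨6*k^2 + 5*k + 1, by ring⟩
  rw [Int.even_iff] at h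
  omega

lemma pent_nonneg (i : ℤ) : 0 ≤ (3*i^2 - i)/2 := by
  have h : 0 ≤ 3*i^2 - i := by
    rcases le_or_gt 0 i with h | h
    · nlinarith [sq_nonneg (i-1)]
    · nlinarith [sq_nonneg i]
  exact Int.ediv_nonneg h (by norm_num)

lemma pent_succ (i : ℤ) : (3*(i+1)^2 - (i+1))/2 = (3*i^2 - i)/2 + (3*i + 1) := by
  have h1 := pent_even i
  have h2 := pent_even (i+1)
  have h3 : 3*(i+1)^2 - (i+1) = 3*i^2 - i + 2*(3*i+1) := by ring
  omega

noncomputable def sgn (i : ℤ) : Polynomial ℤ := C ((Int.negOnePow i : ℤˣ) : ℤ)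

lemma sgn_succ (i : ℤ) : sgn (i+1) = - sgn i := by
  rw [sgn, sgn, Int.negOnePow_succ, Units.val_neg, map_neg]

noncomputable def Eterm (M : ℕ) (i : ℤ) : Polynomial ℤ :=
  sgn i * X ^ ((3 * i ^ 2 - i) / 2).toNat * gaussBinomZ M (colZ M i)

noncomputable def extraTerm (M : ℕ) (i : ℤ) : Polynomial ℤ :=
  if Even ((M:ℤ) + 1 + i) then
    sgn i * X ^ (((3 * i ^ 2 - i) / 2 + colZ (M+1) i).toNat) * gaussBinomZ M (colZ (M+1) i)
  else
    sgn i * X ^ (((3 * i ^ 2 - i) / 2 + ((M:ℤ)+1) - colZ (M+1) i).toNat) *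
      gaussBinomZ M (colZ (M+1) i - 1)

lemma cast_succ (M : ℕ) : ((M+1 : ℕ) : ℤ) = (M:ℤ) + 1 := by push_cast; ring

lemma Eterm_step (M : ℕ) (i : ℤ) :
    Eterm (M+1) i = Eterm M i + extraTerm M i := by
  have hp2 := pent_even i
  have hp0 := pent_nonneg i
  by_cases h : Even ((M:ℤ) + 1 + i)
  · -- col goes up by one; use pascalZ_b
    have hc : 2 * colZ (M+1) i = (M:ℤ) + 1 + 3*i := by
      have := colZ_even (M := M+1) (i := i) (by rw [cast_succ]; exact h)
      rw [cast_succ] at this; omega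
    have hcM : colZ M i = colZ (M+1) i - 1 := by
      have hMo : ¬ Even ((M:ℤ) + i) := by
        rw [Int.even_iff] at h ⊢; omega
      have := colZ_odd hMo
      omega
    rw [Eterm, pascalZ_b M (colZ (M+1) i), extraTerm, if_pos h, Eterm, hcM]
    set c := colZ (M+1) i with hcdef
    rcases le_or_gt 0 c with hc0 | hc0
    · have : ((3 * i ^ 2 - i) / 2 + c).toNat = ((3 * i ^ 2 - i) / 2).toNat + c.toNat := by
        omega
      rw [this, pow_add]
      ring
    · rw [gBZ_of_neg hc0]
      ring
  · -- col stays; use pascalZ_a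
    have hc : 2 * colZ (M+1) i = (M:ℤ) + 3*i := by
      have := colZ_odd (M := M+1) (i := i) (by rw [cast_succ]; exact h)
      rw [cast_succ] at this; omega
    have hcM : colZ M i = colZ (M+1) i := by
      have hMe : Even ((M:ℤ) + i) := by
        rw [Int.even_iff] at h ⊢; omega
      have := colZ_even hMe
      omega
    rw [Eterm, pascalZ_a M (colZ (M+1) i), extraTerm, if_neg h, Eterm, hcM]
    set c := colZ (M+1) i with hcdef
    rcases le_or_gt c ((M:ℤ)+1) with hc0 | hc0
    · have : ((3 * i ^ 2 - i) / 2 + ((M:ℤ)+1) - c).toNat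
          = ((3 * i ^ 2 - i) / 2).toNat + (((M:ℤ)+1-c)).toNat := by
        omega
      rw [this, pow_add]
      ring
    · rw [gBZ_of_gt (show (M:ℤ) < c - 1 by omega)]
      ring

lemma extra_cancel (M : ℕ) (i : ℤ) (h : Even ((M:ℤ)+1+i)) :
    extraTerm M i + extraTerm M (i+1) = 0 := by
  have h1 : ¬ Even ((M:ℤ)+1+(i+1)) := by rw [Int.even_iff] at h ⊢; omega
  have hc : 2 * colZ (M+1) i = (M:ℤ) + 1 + 3*i := by
    have := colZ_even (M := M+1) (i := i) (by rw [cast_succ]; exact h)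
    rw [cast_succ] at this; omega
  have hc' : 2 * colZ (M+1) (i+1) = (M:ℤ) + 3*(i+1) := by
    have := colZ_odd (M := M+1) (i := i+1) (by rw [cast_succ]; exact h1)
    rw [cast_succ] at this; omega
  have harg : colZ (M+1) (i+1) - 1 = colZ (M+1) i := by omega
  rw [extraTerm, if_pos h, extraTerm, if_neg h1, harg]
  have hp2 := pent_even i
  have hp0 := pent_nonneg i
  have hp0' := pent_nonneg (i+1)
  have hps := pent_succ i
  set c := colZ (M+1) i with hcdef
  rcases lt_trichotomy c 0 with hc0 | hc0 | hc0
  · rw [gBZ_of_neg hc0]; ring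
  · -- c = 0 or general 0 ≤ c ≤ M vs c > M
    rcases le_or_gt c (M:ℤ) with hcM | hcM
    · have hexp : ((3*(i+1)^2 - (i+1))/2 + ((M:ℤ)+1) - colZ (M+1) (i+1)).toNat
          = ((3 * i ^ 2 - i) / 2 + c).toNat := by omega
      rw [hexp, sgn_succ]
      ring
    · rw [gBZ_of_gt hcM]; ring
  · rcases le_or_gt c (M:ℤ) with hcM | hcM
    · have hexp : ((3*(i+1)^2 - (i+1))/2 + ((M:ℤ)+1) - colZ (M+1) (i+1)).toNat
          = ((3 * i ^ 2 - i) / 2 + c).toNat := by omega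
      rw [hexp, sgn_succ]
      ring
    · rw [gBZ_of_gt hcM]; ring

lemma Eterm_eq_zero {M : ℕ} {i : ℤ} (h : i < -((M:ℤ)+1) ∨ (M:ℤ)+1 < i) : Eterm M i = 0 := by
  have hcol : 2 * colZ M i = (M:ℤ)+3*i ∨ 2 * colZ M i = (M:ℤ)+3*i-1 := by
    by_cases he : Even ((M:ℤ)+i)
    · exact Or.inl (colZ_even he)
    · exact Or.inr (colZ_odd he)
  rw [Eterm]
  rcases h with h | h
  · rw [gBZ_of_neg (by omega), mul_zero]
  · rw [gBZ_of_gt (by omega), mul_zero]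

lemma extraTerm_eq_zero {M : ℕ} {i : ℤ} (h : i < -((M:ℤ)+2) ∨ (M:ℤ)+2 < i) :
    extraTerm M i = 0 := by
  rw [extraTerm]
  by_cases he : Even ((M:ℤ)+1+i)
  · have hc : 2 * colZ (M+1) i = (M:ℤ) + 1 + 3*i := by
      have := colZ_even (M := M+1) (i := i) (by rw [cast_succ]; exact he)
      rw [cast_succ] at this; omega
    rw [if_pos he]
    rcases h with h | h
    · rw [gBZ_of_neg (by omega), mul_zero]
    · rw [gBZ_of_gt (by omega), mul_zero]
  · have hc : 2 * colZ (M+1) i = (M:ℤ) + 3*i := by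
      have := colZ_odd (M := M+1) (i := i) (by rw [cast_succ]; exact he)
      rw [cast_succ] at this; omega
    rw [if_neg he]
    rcases h with h | h
    · rw [gBZ_of_neg (by omega), mul_zero]
    · rw [gBZ_of_gt (by omega), mul_zero]

noncomputable def Wfun (M : ℕ) (i : ℤ) : Polynomial ℤ :=
  if Even ((M:ℤ)+1+i) then extraTerm M i else 0

lemma extra_eq_W_sub (M : ℕ) (i : ℤ) : extraTerm M i = Wfun M i - Wfun M (i-1) := by
  by_cases h : Even ((M:ℤ)+1+i)
  · rw [Wfun, Wfun, if_pos h, if_neg (by rw [Int.even_iff] at h ⊢; omega)]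
    ring
  · have h' : Even ((M:ℤ)+1+(i-1)) := by rw [Int.even_iff] at h ⊢; omega
    rw [Wfun, Wfun, if_neg h, if_pos h']
    have hcan := extra_cancel M (i-1) h'
    rw [show i - 1 + 1 = i by ring] at hcan
    linear_combination hcan

lemma sum_extra (M : ℕ) :
    ∑ i ∈ Finset.Icc (-(M:ℤ)-3) ((M:ℤ)+3), extraTerm M i = 0 := by
  have hW0 : Wfun M (-(M:ℤ)-4) = 0 := by
    rw [Wfun]
    split
    · exact extraTerm_eq_zero (Or.inl (by omega))
    · rfl
  have hW1 : Wfun M ((M:ℤ)+3) = 0 := by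
    rw [Wfun]
    split
    · exact extraTerm_eq_zero (Or.inr (by omega))
    · rfl
  calc ∑ i ∈ Finset.Icc (-(M:ℤ)-3) ((M:ℤ)+3), extraTerm M i
      = ∑ i ∈ Finset.Icc (-(M:ℤ)-3) ((M:ℤ)+3), (Wfun M i - Wfun M (i-1)) := by
        exact Finset.sum_congr rfl fun i _ => extra_eq_W_sub M i
    _ = (∑ i ∈ Finset.Icc (-(M:ℤ)-3) ((M:ℤ)+3), Wfun M i)
        - ∑ i ∈ Finset.Icc (-(M:ℤ)-3) ((M:ℤ)+3), Wfun M (i-1) := Finset.sum_sub_distrib _ _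
    _ = 0 := by
        have e1 : ∑ i ∈ Finset.Icc (-(M:ℤ)-3) ((M:ℤ)+3), Wfun M (i-1)
            = ∑ i ∈ Finset.Icc (-(M:ℤ)-4) ((M:ℤ)+2), Wfun M i := by
          rw [show Finset.Icc (-(M:ℤ)-3) ((M:ℤ)+3)
              = (Finset.Icc (-(M:ℤ)-4) ((M:ℤ)+2)).map (addRightEmbedding 1) by
            rw [Finset.map_add_right_Icc]; congr 1 <;> ring]
          rw [Finset.sum_map]
          apply Finset.sum_congr rfl
          intro i _
          simp [addRightEmbedding_apply]
        rw [e1]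
        have e2 : ∑ i ∈ Finset.Icc (-(M:ℤ)-3) ((M:ℤ)+3), Wfun M i
            = ∑ i ∈ Finset.Icc (-(M:ℤ)-4) ((M:ℤ)+3), Wfun M i := by
          apply Finset.sum_subset
          · intro x hx
            simp only [Finset.mem_Icc] at hx ⊢
            omega
          · intro x hx hx'
            simp only [Finset.mem_Icc] at hx hx'
            have : x = -(M:ℤ)-4 := by omega
            rw [this]; exact hW0
        have e3 : ∑ i ∈ Finset.Icc (-(M:ℤ)-4) ((M:ℤ)+2), Wfun M i
            = ∑ i ∈ Finset.Icc (-(M:ℤ)-4) ((M:ℤ)+3), Wfun M i := by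
          apply Finset.sum_subset
          · intro x hx
            simp only [Finset.mem_Icc] at hx ⊢
            omega
          · intro x hx hx'
            simp only [Finset.mem_Icc] at hx hx'
            have : x = (M:ℤ)+3 := by omega
            rw [this]; exact hW1
        rw [e2, e3, sub_self]

noncomputable def EulerSum (M : ℕ) : Polynomial ℤ := ∑ᶠ i : ℤ, Eterm M i

lemma E_eq_sum (M B : ℕ) (hB : M + 1 ≤ B) :
    EulerSum M = ∑ i ∈ Finset.Icc (-(B:ℤ)) (B:ℤ), Eterm M i := by
  apply finsum_eq_finset_sum_of_support_subset
  intro i hi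
  simp only [Finset.coe_Icc, Set.mem_Icc]
  by_contra hc
  push_neg at hc
  apply hi
  apply Eterm_eq_zero
  by_cases h : -(B:ℤ) ≤ i
  · right; have := hc h; omega
  · left; omega

lemma sum_extra' (M : ℕ) :
    ∑ i ∈ Finset.Icc (-((M:ℤ)+4)) ((M:ℤ)+4), extraTerm M i = 0 := by
  rw [← sum_extra M]
  symm
  apply Finset.sum_subset
  · intro x hx
    simp only [Finset.mem_Icc] at hx ⊢
    omega
  · intro x hx hx'
    simp only [Finset.mem_Icc] at hx hx'
    apply extraTerm_eq_zero
    omega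

lemma EulerSum_succ (M : ℕ) : EulerSum (M+1) = EulerSum M := by
  rw [E_eq_sum (M+1) (M+4) (by omega), E_eq_sum M (M+4) (by omega)]
  have hcast : ((M+4 : ℕ) : ℤ) = (M:ℤ)+4 := by push_cast; ring
  rw [hcast]
  calc ∑ i ∈ Finset.Icc (-((M:ℤ)+4)) ((M:ℤ)+4), Eterm (M+1) i
      = ∑ i ∈ Finset.Icc (-((M:ℤ)+4)) ((M:ℤ)+4), (Eterm M i + extraTerm M i) :=
        Finset.sum_congr rfl fun i _ => Eterm_step M i
    _ = (∑ i ∈ Finset.Icc (-((M:ℤ)+4)) ((M:ℤ)+4), Eterm M i)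
        + ∑ i ∈ Finset.Icc (-((M:ℤ)+4)) ((M:ℤ)+4), extraTerm M i := Finset.sum_add_distrib
    _ = ∑ i ∈ Finset.Icc (-((M:ℤ)+4)) ((M:ℤ)+4), Eterm M i := by
        rw [sum_extra', add_zero]

lemma EulerSum_zero : EulerSum 0 = 1 := by
  rw [EulerSum]
  have h0 : Eterm 0 0 = 1 := by
    rw [Eterm]
    have hc : colZ 0 0 = 0 := by
      rw [colZ]
      norm_num
    rw [hc, gBZ_zero]
    simp [sgn]
  rw [finsum_eq_single _ (0 : ℤ)]
  · exact h0
  · intro i hi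
    have hcol : 2 * colZ 0 i = 3*i ∨ 2 * colZ 0 i = 3*i-1 := by
      by_cases he : Even ((0:ℤ)+i)
      · have := colZ_even (M := 0) he; left; omega
      · have := colZ_odd (M := 0) he; right; omega
    rw [Eterm]
    rcases lt_trichotomy i 0 with h | h | h
    · rw [gBZ_of_neg (by omega), mul_zero]
    · exact absurd h hi
    · rw [gBZ_of_gt (by omega), mul_zero]

lemma EulerSum_eq_one (M : ℕ) : EulerSum M = 1 := by
  induction M with
  | zero => exact EulerSum_zero
  | succ M ih => rw [EulerSum_succ, ih]

theorem q_euler_char_N_three (n : ℕ) :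
    ∑ᶠ i : ℤ, (C ((Int.negOnePow i : ℤˣ) : ℤ) *
      X ^ ((3 * i ^ 2 - i) / 2).toNat * gaussBinomZ (2 * n) (colFun n 3 1 i)) =
      1 := by
  have hcol : ∀ i : ℤ, colFun n 3 1 i = colZ (2*n) i := by
    intro i
    have hcast : ((2*n : ℕ) : ℤ) = 2*(n:ℤ) := by push_cast; ring
    rcases Int.even_or_odd i with ⟨t, rfl⟩ | ⟨t, rfl⟩
    · have he : Even (((2*n : ℕ):ℤ) + (t+t)) := ⟨(n:ℤ)+t, by rw [hcast]; ring⟩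
      have h2 := colZ_even he
      rw [hcast] at h2
      rw [colFun, if_pos ⟨t, rfl⟩]
      omega
    · have ho : ¬ Even (((2*n : ℕ):ℤ) + (2*t+1)) := by
        rw [Int.even_iff, hcast]
        omega
      have h2 := colZ_odd ho
      rw [hcast] at h2
      rw [colFun, if_neg (by rw [Int.even_iff]; omega)]
      omega
  have : ∀ i : ℤ, C ((Int.negOnePow i : ℤˣ) : ℤ) *
      X ^ ((3 * i ^ 2 - i) / 2).toNat * gaussBinomZ (2 * n) (colFun n 3 1 i)
      = Eterm (2*n) i := by
    intro i
    rw [Eterm, sgn, hcol i]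
  rw [finsum_congr this]
  exact EulerSum_eq_one (2*n)
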